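/- arXiv:1907.07097 — 4 statements merged into one kernel-verified Lean document; each statement's English description precedes it below -/
import Mathlib

section
/- Let q be odd. Let n ≥ 1, let M be an n×n symmetric matrix over O with det M ≠ 0, set F(x) = xᵀMx and F*(w) = wᵀ·adj(M)·w where adj(M) is the adjugate matrix of M. Let ϖ ∈ O be monic irreducible with ϖ ∤ det M, let k ≥ 1 be an even integer and v ∈ O^n, and set S = Σ_{a} Σ_{x} ψ((a·F(x) − v·x)/ϖ^k), where a runs over elements of O with |a| < |ϖ|^k and gcd(a,ϖ) = 1, and x runs over O^n with |x| < |ϖ|^k. Then S = |ϖ|^{nk/2}·(|ϖ|^k·δ₁ − |ϖ|^{k−1}·δ₂), where δ₁ = 1 if ϖ^k ∣ F*(v) and δ₁ = 0 otherwise, and δ₂ = 1 if ϖ^{k−1} ∣ F*(v) and δ₂ = 0 otherwise. -/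
set_option autoImplicit false
set_option linter.unusedSectionVars false
set_option linter.unusedVariables false
set_option maxHeartbeats 1000000

noncomputable section

open Polynomial Matrix
open scoped Classical

variable {Fq : Type} [Field Fq] [Fintype Fq]

/-- The absolute value on `O = Fq[t]`: `|x| = q ^ deg x` for `x ≠ 0`, and `|0| = 0`. -/
def Oabs (x : Fq[X]) : ℝ := if x = 0 then 0 else (Fintype.card Fq : ℝ) ^ x.natDegree

/-- The maximum norm on pairs of polynomials. -/
def Oabs2 (a : Fq[X] × Fq[X]) : ℝ := max (Oabs a.1) (Oabs a.2)

/-- A pair `c = (c₁, c₂)` is primitive if `gcd(c₁,c₂) = 1` and either `c₁` is monic,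
or `c₁ = 0` and `c₂` is monic. -/
def Primitive (c : Fq[X] × Fq[X]) : Prop :=
  IsCoprime c.1 c.2 ∧ (c.1.Monic ∨ (c.1 = 0 ∧ c.2.Monic))

/-- `gcd(a, b, r) = 1`: every common divisor of `a`, `b` and `r` is a unit. -/
def CoprimeTriple (a b r : Fq[X]) : Prop :=
  ∀ p : Fq[X], p ∣ a → p ∣ b → p ∣ r → IsUnit p

/-- `a/r` lies on the generalised line `L(d·c)`: there is `k` with
`d(c₁a₁ + c₂a₂) = k·r` and `gcd(d,k) = 1`. -/
def OnLine (d : Fq[X]) (c : Fq[X] × Fq[X]) (r : Fq[X]) (a : Fq[X] × Fq[X]) : Prop :=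
  ∃ k : Fq[X], d * (c.1 * a.1 + c.2 * a.2) = k * r ∧ IsCoprime d k

/-- The embedding of `O = Fq[t]` into `K_∞ = Fq((1/t))`, realised as formal Laurent
series in the variable `u = t⁻¹`; the polynomial variable `t` is sent to `u⁻¹`. -/
def OtoK : Fq[X] →+* LaurentSeries Fq :=
  Polynomial.eval₂RingHom HahnSeries.C (HahnSeries.single (-1 : ℤ) 1)

/-- The absolute value on `K_∞`: `|x| = q^{deg x}`, i.e. `q^{-ord_u x}` where `u = t⁻¹`. -/
def Kabs (x : LaurentSeries Fq) : ℝ :=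
  if x = 0 then 0 else (Fintype.card Fq : ℝ) ^ (-x.order)



/-! ### polynomials of bounded degree -/

def pol {N : ℕ} (c : Fin N → Fq) : Fq[X] := ∑ i : Fin N, C (c i) * X ^ (i : ℕ)

lemma coeff_pol {N : ℕ} (c : Fin N → Fq) (j : ℕ) :
    (pol c).coeff j = if h : j < N then c ⟨j, h⟩ else 0 := by
  rw [pol, finset_sum_coeff]
  simp only [coeff_C_mul, coeff_X_pow, mul_ite, mul_one, mul_zero]
  split
  · next h =>
    rw [Finset.sum_eq_single (⟨j, h⟩ : Fin N)]
    · simp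
    · intro b _ hb
      simp only [ite_eq_right_iff]
      intro hj; exact absurd (by simp [hj]) hb
    · simp
  · next h =>
    apply Finset.sum_eq_zero
    intro b _
    simp only [ite_eq_right_iff]
    intro hj; exact absurd (hj ▸ b.2) h

lemma degree_pol_lt {N : ℕ} (c : Fin N → Fq) : (pol c).degree < N := by
  apply Polynomial.degree_lt_iff_coeff_zero _ _ |>.2
  intro j hj
  rw [coeff_pol]
  simp [Nat.not_lt.2 hj]

lemma pol_injective {N : ℕ} : Function.Injective (pol (Fq := Fq) (N := N)) := by
  intro c c' h
  funext i
  have := congrArg (fun p => Polynomial.coeff p i) h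
  simpa [coeff_pol] using this

def reps (N : ℕ) : Finset Fq[X] := Finset.image pol (Finset.univ : Finset (Fin N → Fq))

lemma mem_reps {N : ℕ} {p : Fq[X]} : p ∈ reps N ↔ p.degree < N := by
  constructor
  · rintro h
    rw [reps, Finset.mem_image] at h
    obtain ⟨c, _, rfl⟩ := h
    exact degree_pol_lt c
  · intro h
    rw [reps, Finset.mem_image]
    refine ⟨fun i => p.coeff i, Finset.mem_univ _, ?_⟩
    ext j
    rw [coeff_pol]
    split
    · rfl
    · next hj =>
      exact (Polynomial.coeff_eq_zero_of_degree_lt (lt_of_lt_of_le h (by exact_mod_cast Nat.not_lt.1 hj))).symm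

lemma card_reps (N : ℕ) : (reps (Fq := Fq) N).card = Fintype.card Fq ^ N := by
  rw [reps, Finset.card_image_of_injective _ pol_injective, Finset.card_univ]
  simp


lemma OtoK_X : OtoK (X : Fq[X]) = HahnSeries.single (-1 : ℤ) 1 :=
  Polynomial.eval₂_X _ _

lemma OtoK_C (a : Fq) : OtoK (C a) = HahnSeries.C a :=
  Polynomial.eval₂_C _ _

lemma OtoK_monomial (a : Fq) (i : ℕ) :
    OtoK (C a * X ^ i) = HahnSeries.single (-(i:ℤ)) a := by
  rw [_root_.map_mul, _root_.map_pow, OtoK_X, OtoK_C, HahnSeries.single_pow]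
  have : HahnSeries.C a = HahnSeries.single (0:ℤ) a := rfl
  rw [this, HahnSeries.single_mul_single]
  simp

lemma OtoK_coeff (p : Fq[X]) (j : ℤ) :
    (OtoK p).coeff j = if j ≤ 0 then p.coeff (-j).toNat else 0 := by
  induction p using Polynomial.induction_on' with
  | add f g hf hg =>
    rw [map_add, HahnSeries.coeff_add, hf, hg, coeff_add]
    split <;> simp
  | monomial i a =>
    rw [← C_mul_X_pow_eq_monomial, OtoK_monomial, HahnSeries.coeff_single]
    simp only [coeff_C_mul, coeff_X_pow, mul_ite, mul_one, mul_zero]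
    by_cases h1 : j = -(i:ℤ)
    · subst h1; simp
    · rw [if_neg h1]
      by_cases h2 : j ≤ 0
      · rw [if_pos h2, if_neg (fun hc => h1 (by omega))]
      · rw [if_neg h2]

lemma OtoK_ne_zero {p : Fq[X]} (hp : p ≠ 0) : OtoK p ≠ 0 := by
  intro h
  have := OtoK_coeff p (-(p.natDegree : ℤ))
  rw [h] at this
  simp only [HahnSeries.coeff_zero] at this
  rw [if_pos (by omega)] at this
  simp only [neg_neg, Int.toNat_natCast] at this
  exact Polynomial.leadingCoeff_ne_zero.2 hp this.symm

lemma OtoK_order {p : Fq[X]} (hp : p ≠ 0) : (OtoK p).order = -(p.natDegree : ℤ) := by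
  refine le_antisymm (HahnSeries.order_le_of_coeff_ne_zero ?_) ?_
  · rw [OtoK_coeff, if_pos (by omega)]
    simpa using Polynomial.leadingCoeff_ne_zero.2 hp
  · by_contra hlt
    push_neg at hlt
    have hne := (mt HahnSeries.coeff_order_eq_zero.1 (OtoK_ne_zero hp))
    rw [OtoK_coeff] at hne
    rcases le_or_gt (OtoK p).order 0 with h0 | h0
    · rw [if_pos h0] at hne
      apply hne
      apply Polynomial.coeff_eq_zero_of_natDegree_lt
      omega
    · rw [if_neg (by omega)] at hne
      exact hne rfl

lemma OtoK_leadingCoeff {p : Fq[X]} (hp : p ≠ 0) :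
    (OtoK p).coeff (OtoK p).order = p.leadingCoeff := by
  rw [OtoK_order hp, OtoK_coeff, if_pos (by omega), neg_neg, Int.toNat_natCast]
  rfl

section psi
variable (ψ : LaurentSeries Fq → ℂ)

lemma psi_zero (hψ1 : ∀ x, ‖ψ x‖ = 1)
    (hψ2 : ∀ x y, ψ (x + y) = ψ x * ψ y) : ψ 0 = 1 := by
  have h := hψ2 0 0
  rw [add_zero] at h
  have hne : ψ 0 ≠ 0 := by
    intro hc
    have h0 := hψ1 0
    rw [hc] at h0
    simp at h0
  exact (mul_left_cancel₀ hne (by rw [mul_one, ← h])).symm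

lemma psi_congr (hψ2 : ∀ x y, ψ (x + y) = ψ x * ψ y)
    (hψ4 : ∀ x, Kabs x ≤ (Fintype.card Fq : ℝ) ^ (-2 : ℤ) → ψ x = 1)
    {x y : LaurentSeries Fq} (h : Kabs (x - y) ≤ (Fintype.card Fq : ℝ) ^ (-2 : ℤ)) :
    ψ x = ψ y := by
  have := hψ2 y (x - y)
  rw [add_sub_cancel] at this
  rw [this, hψ4 _ h, mul_one]

lemma one_lt_q : (1:ℝ) < (Fintype.card Fq : ℝ) := by
  exact_mod_cast Fintype.one_lt_card

lemma exists_nontriv (ϖ : Fq[X]) (hmon : ϖ.Monic) (hd : 1 ≤ ϖ.natDegree)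
    (hψ1 : ∀ x, ‖ψ x‖ = 1)
    (hψ2 : ∀ x y, ψ (x + y) = ψ x * ψ y)
    (hψ4 : ∀ x, Kabs x ≤ (Fintype.card Fq : ℝ) ^ (-2 : ℤ) → ψ x = 1)
    (hψ5 : ∃ x, Kabs x ≤ (Fintype.card Fq : ℝ) ^ (-1 : ℤ) ∧ ψ x ≠ 1) :
    ∃ w : Fq[X], ψ (OtoK w / OtoK ϖ) ≠ 1 := by
  have hq1 : (1:ℝ) < (Fintype.card Fq : ℝ) := one_lt_q
  obtain ⟨x, hx, hxne⟩ := hψ5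
  have hx0 : x ≠ 0 := by
    rintro rfl
    exact hxne (psi_zero ψ hψ1 hψ2)
  rw [Kabs, if_neg hx0] at hx
  have hord1 : (1:ℤ) ≤ x.order := by
    have := (zpow_le_zpow_iff_right₀ hq1).1 hx
    omega
  have hord2 : x.order < 2 := by
    by_contra hcon
    push_neg at hcon
    apply hxne
    apply hψ4
    rw [Kabs, if_neg hx0]
    exact zpow_le_zpow_right₀ hq1.le (by omega)
  have hordx : x.order = 1 := by omega
  set d := ϖ.natDegree with hdd
  have hϖ0 : ϖ ≠ 0 := hmon.ne_zero
  have hOϖ : OtoK ϖ ≠ 0 := OtoK_ne_zero hϖ0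
  set c := x.coeff 1 with hcc
  have hc : c ≠ 0 := by
    have := (mt HahnSeries.coeff_order_eq_zero.1 hx0)
    rwa [hordx] at this
  set w : Fq[X] := C c * X ^ (d - 1) with hww
  have hOw : OtoK w = HahnSeries.single ((1:ℤ) - d) c := by
    rw [hww, OtoK_monomial]
    congr 1
    have h9 : ((d - 1 : ℕ) : ℤ) = (d:ℤ) - 1 := by omega
    rw [h9]
    ring
  set z := OtoK w - x * OtoK ϖ with hzz
  have key : ∀ j : ℤ, j ≤ 1 - (d:ℤ) → z.coeff j = 0 := by
    intro j hj
    have hprod0 : x * OtoK ϖ ≠ 0 := mul_ne_zero hx0 hOϖ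
    have hordp : (x * OtoK ϖ).order = 1 - (d:ℤ) := by
      rw [HahnSeries.order_mul hx0 hOϖ, hordx, OtoK_order hϖ0]
      ring
    rcases eq_or_lt_of_le hj with hj | hj
    · have h1 : (OtoK w).coeff j = c := by
        rw [hOw, HahnSeries.coeff_single, if_pos hj]
      have h2 : (x * OtoK ϖ).coeff j = c := by
        have := HahnSeries.coeff_mul_order_add_order x (OtoK ϖ)
        rw [hordx, OtoK_order hϖ0] at this
        have he : (1:ℤ) + -(d:ℤ) = j := by omega
        rw [he] at this
        rw [this, HahnSeries.leadingCoeff_eq, HahnSeries.leadingCoeff_eq, hordx,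
          OtoK_leadingCoeff hϖ0, hmon.leadingCoeff, mul_one]
      rw [hzz, HahnSeries.coeff_sub, h1, h2, sub_self]
    · have h1 : (OtoK w).coeff j = 0 := by
        rw [hOw, HahnSeries.coeff_single, if_neg (by omega)]
      have h2 : (x * OtoK ϖ).coeff j = 0 :=
        HahnSeries.coeff_eq_zero_of_lt_order (by omega)
      rw [hzz, HahnSeries.coeff_sub, h1, h2, sub_zero]
  refine ⟨w, ?_⟩
  have hdiff : OtoK w / OtoK ϖ - x = z / OtoK ϖ := by
    rw [hzz, sub_div, mul_div_cancel_right₀ _ hOϖ]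
  have hsmall : Kabs (OtoK w / OtoK ϖ - x) ≤ (Fintype.card Fq : ℝ) ^ (-2 : ℤ) := by
    rw [hdiff]
    rcases eq_or_ne z 0 with hz0 | hz0
    · rw [hz0, zero_div, Kabs, if_pos rfl]
      positivity
    · have hordz : 2 - (d:ℤ) ≤ z.order := by
        by_contra hcon
        push_neg at hcon
        exact (mt HahnSeries.coeff_order_eq_zero.1 hz0) (key z.order (by omega))
      have hy0 : z / OtoK ϖ ≠ 0 := div_ne_zero hz0 hOϖ
      have hordy : (2:ℤ) ≤ (z / OtoK ϖ).order := by
        have hmul : z / OtoK ϖ * OtoK ϖ = z := div_mul_cancel₀ _ hOϖ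
        have := HahnSeries.order_mul hy0 hOϖ
        rw [hmul, OtoK_order hϖ0] at this
        omega
      rw [Kabs, if_neg hy0]
      exact zpow_le_zpow_right₀ hq1.le (by omega)
  rw [psi_congr ψ hψ2 hψ4 hsmall]
  exact hxne

end psi


/-! ### mod helpers -/

lemma dvd_sub_mod {g : Fq[X]} (hg : g.Monic) (x : Fq[X]) : g ∣ x - x %ₘ g :=
  ⟨x /ₘ g, by have h := Polynomial.modByMonic_add_div x g; linear_combination -h⟩

lemma mod_mem_reps {g : Fq[X]} (hg : g.Monic) {N : ℕ} (hgN : g.natDegree = N)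
    (x : Fq[X]) : x %ₘ g ∈ reps N := by
  rw [mem_reps, ← hgN]
  have h := Polynomial.degree_modByMonic_lt x hg
  rwa [Polynomial.degree_eq_natDegree hg.ne_zero] at h

lemma reps_eq_of_dvd {g : Fq[X]} (hg : g.Monic) {N : ℕ} (hgN : g.natDegree = N)
    {a b : Fq[X]} (ha : a ∈ reps N) (hb : b ∈ reps N) (h : g ∣ a - b) : a = b := by
  rw [mem_reps] at ha hb
  have hdeg : (a - b).degree < g.degree := by
    rw [Polynomial.degree_eq_natDegree hg.ne_zero, hgN]
    exact lt_of_le_of_lt (Polynomial.degree_sub_le a b) (max_lt ha hb)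
  have h0 : a - b = 0 := Polynomial.eq_zero_of_dvd_of_degree_lt h hdeg
  exact sub_eq_zero.1 h0

lemma reps_mod_self {g : Fq[X]} (hg : g.Monic) {N : ℕ} (hgN : g.natDegree = N)
    {a : Fq[X]} (ha : a ∈ reps N) : a %ₘ g = a := by
  rw [Polynomial.modByMonic_eq_self_iff hg, Polynomial.degree_eq_natDegree hg.ne_zero, hgN]
  exact mem_reps.1 ha

/-! ### the character E -/

section E
variable (ψ : LaurentSeries Fq → ℂ) (ϖ : Fq[X])

def Efun (j : ℕ) (p : Fq[X]) : ℂ := ψ (OtoK p / OtoK (ϖ ^ j))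

variable {ϖ}

lemma Efun_add (hψ2 : ∀ x y, ψ (x + y) = ψ x * ψ y) (j : ℕ) (p q : Fq[X]) :
    Efun ψ ϖ j (p + q) = Efun ψ ϖ j p * Efun ψ ϖ j q := by
  rw [Efun, Efun, Efun, map_add, add_div]
  exact hψ2 _ _

lemma Efun_dvd (hψ3 : ∀ p : Fq[X], ψ (OtoK p) = 1) (hϖ0 : ϖ ≠ 0)
    {j : ℕ} {p : Fq[X]} (h : ϖ ^ j ∣ p) : Efun ψ ϖ j p = 1 := by
  obtain ⟨c, rfl⟩ := h
  rw [Efun, _root_.map_mul, mul_div_cancel_left₀ _ (OtoK_ne_zero (pow_ne_zero _ hϖ0))]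
  exact hψ3 c

lemma Efun_congr (hψ2 : ∀ x y, ψ (x + y) = ψ x * ψ y)
    (hψ3 : ∀ p : Fq[X], ψ (OtoK p) = 1) (hϖ0 : ϖ ≠ 0)
    {j : ℕ} {p q : Fq[X]} (h : ϖ ^ j ∣ p - q) : Efun ψ ϖ j p = Efun ψ ϖ j q := by
  have he : p = q + (p - q) := by ring
  rw [he, Efun_add ψ hψ2, Efun_dvd ψ hψ3 hϖ0 h, mul_one]

lemma Efun_pow_shift (hϖ0 : ϖ ≠ 0) (i j : ℕ) (p : Fq[X]) :
    Efun ψ ϖ (i + j) (ϖ ^ i * p) = Efun ψ ϖ j p := by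
  rw [Efun, Efun, _root_.map_mul, pow_add, _root_.map_mul,
    mul_div_mul_left _ _ (OtoK_ne_zero (pow_ne_zero _ hϖ0))]

lemma Efun_finsetSum (hψ2 : ∀ x y, ψ (x + y) = ψ x * ψ y)
    (hψ3 : ∀ p : Fq[X], ψ (OtoK p) = 1) (hϖ0 : ϖ ≠ 0)
    {ι : Type} (s : Finset ι) (j : ℕ) (f : ι → Fq[X]) :
    Efun ψ ϖ j (∑ i ∈ s, f i) = ∏ i ∈ s, Efun ψ ϖ j (f i) := by
  classical
  induction s using Finset.induction_on with
  | empty => simpa using Efun_dvd ψ hψ3 hϖ0 (dvd_zero _)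
  | insert a s h ih =>
    rw [Finset.sum_insert h, Finset.prod_insert h, Efun_add ψ hψ2, ih]

lemma orth (hmon : ϖ.Monic) (hirr : Irreducible ϖ)
    (hψ1 : ∀ x, ‖ψ x‖ = 1)
    (hψ2 : ∀ x y, ψ (x + y) = ψ x * ψ y)
    (hψ3 : ∀ p : Fq[X], ψ (OtoK p) = 1)
    (hψ4 : ∀ x, Kabs x ≤ (Fintype.card Fq : ℝ) ^ (-2 : ℤ) → ψ x = 1)
    (hψ5 : ∃ x, Kabs x ≤ (Fintype.card Fq : ℝ) ^ (-1 : ℤ) ∧ ψ x ≠ 1)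
    (j : ℕ) (hj : 1 ≤ j) (p : Fq[X]) :
    ∑ z ∈ reps (j * ϖ.natDegree), Efun ψ ϖ j (p * z)
      = if ϖ ^ j ∣ p then ((Fintype.card Fq : ℂ)) ^ (j * ϖ.natDegree) else 0 := by
  have hd : 1 ≤ ϖ.natDegree := hirr.natDegree_pos
  have hϖ0 : ϖ ≠ 0 := hmon.ne_zero
  have hgmon : (ϖ ^ j).Monic := hmon.pow _
  have hgN : (ϖ ^ j).natDegree = j * ϖ.natDegree := by
    rw [Polynomial.natDegree_pow]
  split
  · next hdvd =>
    rw [Finset.sum_congr rfl (fun z _ => Efun_dvd ψ hψ3 hϖ0 (Dvd.dvd.mul_right hdvd z))]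
    rw [Finset.sum_const, card_reps]
    simp
  · next hdvd =>
    have hp0 : p ≠ 0 := by rintro rfl; exact hdvd (dvd_zero _)
    obtain ⟨t, u, hu, rfl⟩ := WfDvdMonoid.max_power_factor hp0 hirr
    have ht : t < j := by
      by_contra hc
      push_neg at hc
      exact hdvd (Dvd.dvd.mul_right (pow_dvd_pow _ hc) u)
    obtain ⟨a, b, hab⟩ := ((hirr.coprime_iff_not_dvd.2 hu).symm).pow_right (n := j - t)
    obtain ⟨w₀, hw₀⟩ := exists_nontriv ψ ϖ hmon hd hψ1 hψ2 hψ4 hψ5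
    set w : Fq[X] := a * ϖ ^ (j - 1 - t) * w₀ with hw
    have e1 : ϖ ^ t * ϖ ^ (j - 1 - t) = ϖ ^ (j - 1) := by
      rw [← pow_add]; congr 1; omega
    have e2 : ϖ ^ (j - 1) * ϖ ^ (j - t) = ϖ ^ j * ϖ ^ (j - 1 - t) := by
      rw [← pow_add, ← pow_add]; congr 1; omega
    have hEw : Efun ψ ϖ j (ϖ ^ t * u * w) ≠ 1 := by
      have h1 : ϖ ^ j ∣ (ϖ ^ t * u * w) - ϖ ^ (j - 1) * w₀ :=
        ⟨-b * ϖ ^ (j - 1 - t) * w₀, by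
          rw [hw]
          linear_combination (w₀ * u * a) * e1 + (ϖ ^ (j - 1) * w₀) * hab + (-b * w₀) * e2⟩
      rw [Efun_congr ψ hψ2 hψ3 hϖ0 h1]
      have h2 : ((j - 1) + 1 : ℕ) = j := by omega
      have h3 := Efun_pow_shift ψ hϖ0 (j - 1) 1 w₀
      rw [h2] at h3
      rw [h3, Efun, pow_one]
      exact hw₀
    set S := ∑ z ∈ reps (j * ϖ.natDegree), Efun ψ ϖ j (ϖ ^ t * u * z) with hS
    set c := Efun ψ ϖ j (ϖ ^ t * u * w) with hc
    have key : S * c = S := by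
      rw [hS, Finset.sum_mul]
      refine Finset.sum_nbij' (fun z => (z + w) %ₘ ϖ ^ j) (fun z => (z - w) %ₘ ϖ ^ j)
        (fun z _ => mod_mem_reps hgmon hgN _) (fun z _ => mod_mem_reps hgmon hgN _)
        ?_ ?_ ?_
      · intro z hz
        refine reps_eq_of_dvd hgmon hgN (mod_mem_reps hgmon hgN _) hz ?_
        have hr : ((z + w) %ₘ ϖ ^ j - w) %ₘ ϖ ^ j - z =
            -(((z + w) %ₘ ϖ ^ j - w) - ((z + w) %ₘ ϖ ^ j - w) %ₘ ϖ ^ j)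
              + (-((z + w) - (z + w) %ₘ ϖ ^ j)) := by ring
        rw [hr]
        exact dvd_add (dvd_neg.2 (dvd_sub_mod hgmon _)) (dvd_neg.2 (dvd_sub_mod hgmon _))
      · intro z hz
        refine reps_eq_of_dvd hgmon hgN (mod_mem_reps hgmon hgN _) hz ?_
        have hr : ((z - w) %ₘ ϖ ^ j + w) %ₘ ϖ ^ j - z =
            -(((z - w) %ₘ ϖ ^ j + w) - ((z - w) %ₘ ϖ ^ j + w) %ₘ ϖ ^ j)
              + (-((z - w) - (z - w) %ₘ ϖ ^ j)) := by ring
        rw [hr]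
        exact dvd_add (dvd_neg.2 (dvd_sub_mod hgmon _)) (dvd_neg.2 (dvd_sub_mod hgmon _))
      · intro z hz
        have hcongr : Efun ψ ϖ j (ϖ ^ t * u * ((z + w) %ₘ ϖ ^ j))
            = Efun ψ ϖ j (ϖ ^ t * u * (z + w)) := by
          apply Efun_congr ψ hψ2 hψ3 hϖ0
          have : ϖ ^ t * u * ((z + w) %ₘ ϖ ^ j) - ϖ ^ t * u * (z + w)
              = -(ϖ ^ t * u) * ((z + w) - (z + w) %ₘ ϖ ^ j) := by ring
          rw [this]
          exact Dvd.dvd.mul_left (dvd_sub_mod hgmon _) _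
        rw [hcongr, mul_add, Efun_add ψ hψ2]
    have hSc : S * (c - 1) = 0 := by linear_combination key
    rcases mul_eq_zero.1 hSc with h | h
    · exact h
    · exact absurd (by linear_combination h) hEw

end E


/-! ### misc helpers -/

lemma two_ne_zero_of_odd_card (hodd : Odd (Fintype.card Fq)) : (2:Fq) ≠ 0 := by
  intro h2
  have hchar : ringChar Fq ∣ 2 :=
    (CharP.cast_eq_zero_iff Fq (ringChar Fq) 2).1 (by exact_mod_cast h2)
  have hprime : Nat.Prime (ringChar Fq) := CharP.char_is_prime Fq (ringChar Fq)
  have h2' : ringChar Fq = 2 := (Nat.prime_dvd_prime_iff_eq hprime Nat.prime_two).1 hchar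
  have heven : Fintype.card Fq % 2 = 0 := FiniteField.even_card_iff_char_two.1 h2'
  have hodd' := Nat.odd_iff.1 hodd
  omega

def invmod (r a : Fq[X]) : Fq[X] :=
  if h : ∃ e, r ∣ (a * e - 1) then Classical.choose h else 0

lemma invmod_spec {r a : Fq[X]} (h : IsCoprime a r) : r ∣ (a * invmod r a - 1) := by
  have hex : ∃ e, r ∣ (a * e - 1) := by
    obtain ⟨s, t, hst⟩ := h
    exact ⟨s, ⟨-t, by linear_combination hst⟩⟩
  rw [invmod, dif_pos hex]
  exact Classical.choose_spec hex

lemma dvd_cancel {ϖ u x : Fq[X]} {j : ℕ} (hirr : Irreducible ϖ) (hu : ¬ ϖ ∣ u)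
    (h : ϖ ^ j ∣ u * x) : ϖ ^ j ∣ x :=
  ((hirr.coprime_iff_not_dvd.2 hu).pow_left).dvd_of_dvd_mul_left h

lemma Oabs_lt_iff {ϖ : Fq[X]} (hϖ0 : ϖ ≠ 0) (kk : ℕ) (p : Fq[X]) :
    Oabs p < Oabs ϖ ^ kk ↔ p.degree < ((kk * ϖ.natDegree : ℕ) : WithBot ℕ) := by
  have hq1 : (1:ℝ) < (Fintype.card Fq : ℝ) := one_lt_q
  rw [Oabs, Oabs, if_neg hϖ0]
  rcases eq_or_ne p 0 with rfl | hp0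
  · simp only [if_pos rfl, Polynomial.degree_zero]
    constructor
    · intro _
      exact WithBot.bot_lt_coe _
    · intro _
      positivity
  · rw [if_neg hp0, ← pow_mul, pow_lt_pow_iff_right₀ hq1,
      Polynomial.degree_eq_natDegree hp0, Nat.cast_lt, Nat.mul_comm kk ϖ.natDegree]


/-! ### quadratic expansion -/

lemma master {n : ℕ} (M : Matrix (Fin n) (Fin n) Fq[X]) (hMs : Mᵀ = M)
    (v x₀ y : Fin n → Fq[X]) (g aa : Fq[X]) :
    aa * ((x₀ + g • y) ⬝ᵥ M.mulVec (x₀ + g • y)) - v ⬝ᵥ (x₀ + g • y)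
    = (aa * (x₀ ⬝ᵥ M.mulVec x₀) - v ⬝ᵥ x₀)
      + g * (((2 * aa) • (M.mulVec x₀) - v) ⬝ᵥ y)
      + (g * g) * (aa * (y ⬝ᵥ M.mulVec y)) := by
  have hyx : y ⬝ᵥ M.mulVec x₀ = x₀ ⬝ᵥ M.mulVec y := by
    rw [Matrix.dotProduct_mulVec, ← Matrix.mulVec_transpose, hMs, dotProduct_comm]
  have hyx2 : (M.mulVec x₀) ⬝ᵥ y = x₀ ⬝ᵥ M.mulVec y := by
    rw [dotProduct_comm, hyx]
  simp only [Matrix.mulVec_add, Matrix.mulVec_smul, dotProduct_add,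
    add_dotProduct, dotProduct_smul, smul_dotProduct,
    sub_dotProduct, smul_eq_mul]
  rw [hyx, hyx2]
  ring

section ysum
variable (ψ : LaurentSeries Fq → ℂ) {ϖ : Fq[X]}

lemma ysum (hmon : ϖ.Monic) (hirr : Irreducible ϖ)
    (hψ1 : ∀ x, ‖ψ x‖ = 1)
    (hψ2 : ∀ x y, ψ (x + y) = ψ x * ψ y)
    (hψ3 : ∀ p : Fq[X], ψ (OtoK p) = 1)
    (hψ4 : ∀ x, Kabs x ≤ (Fintype.card Fq : ℝ) ^ (-2 : ℤ) → ψ x = 1)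
    (hψ5 : ∃ x, Kabs x ≤ (Fintype.card Fq : ℝ) ^ (-1 : ℤ) ∧ ψ x ≠ 1)
    {n m : ℕ} (hm1 : 1 ≤ m) (c : Fin n → Fq[X]) :
    ∑ y ∈ Fintype.piFinset (fun _ : Fin n => reps (m * ϖ.natDegree)),
        Efun ψ ϖ (m + m) (ϖ ^ m * (c ⬝ᵥ y))
    = if (∀ i, ϖ ^ m ∣ c i) then ((Fintype.card Fq : ℂ)) ^ (n * (m * ϖ.natDegree)) else 0 := by
  have hϖ0 : ϖ ≠ 0 := hmon.ne_zero
  have step1 : ∀ y : Fin n → Fq[X],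
      Efun ψ ϖ (m + m) (ϖ ^ m * (c ⬝ᵥ y)) = ∏ i, Efun ψ ϖ m (c i * y i) := by
    intro y
    rw [Efun_pow_shift ψ hϖ0 m m]
    have : c ⬝ᵥ y = ∑ i, c i * y i := rfl
    rw [this, Efun_finsetSum ψ hψ2 hψ3 hϖ0]
  rw [Finset.sum_congr rfl (fun y _ => step1 y),
    ← Finset.prod_univ_sum (fun _ : Fin n => reps (m * ϖ.natDegree))
      (fun i z => Efun ψ ϖ m (c i * z))]
  rw [Finset.prod_congr rfl (fun i _ => orth ψ hmon hirr hψ1 hψ2 hψ3 hψ4 hψ5 m hm1 (c i))]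
  by_cases hall : ∀ i, ϖ ^ m ∣ c i
  · rw [if_pos hall, Finset.prod_congr rfl (fun i (_ : i ∈ Finset.univ) => if_pos (hall i)),
      Finset.prod_const, Finset.card_univ, Fintype.card_fin, ← pow_mul, Nat.mul_comm]
  · rw [if_neg hall]
    push_neg at hall
    obtain ⟨i, hi⟩ := hall
    exact Finset.prod_eq_zero (Finset.mem_univ i) (if_neg hi)

end ysum


/-! ### the critical point -/

section key
variable {n : ℕ} {M : Matrix (Fin n) (Fin n) Fq[X]} {v : Fin n → Fq[X]}
variable {ϖ a ea s : Fq[X]} {m : ℕ}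

lemma hMw (v : Fin n → Fq[X]) : M.mulVec (M.adjugate.mulVec v) = M.det • v := by
  rw [Matrix.mulVec_mulVec, Matrix.mul_adjugate, Matrix.smul_mulVec, Matrix.one_mulVec]

lemma hatdecomp (hmon : ϖ.Monic) (ea : Fq[X]) (w : Fin n → Fq[X]) :
    (fun i => (ea * w i) %ₘ ϖ ^ m)
      = ea • w + (-(ϖ ^ m)) • (fun i => (ea * w i) /ₘ ϖ ^ m) := by
  funext i
  have h := Polynomial.modByMonic_add_div (ea * w i) (ϖ ^ m)
  simp only [Pi.add_apply, Pi.smul_apply, smul_eq_mul]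
  linear_combination h

lemma key1 (hmon : ϖ.Monic)
    (hs : 2 * M.det * a * ea - 1 = ϖ ^ (m + m) * s) :
    ∀ i, ϖ ^ m ∣ ((2 * a) • (M.mulVec (fun i => (ea * (M.adjugate.mulVec v) i) %ₘ ϖ ^ m)) - v) i := by
  intro i
  set w := M.adjugate.mulVec v with hw
  set eps := (fun i => (ea * w i) /ₘ ϖ ^ m) with heps
  rw [hatdecomp hmon ea w]
  refine ⟨ϖ ^ m * s * v i - 2 * a * (M.mulVec eps i), ?_⟩
  rw [Matrix.mulVec_add, Matrix.mulVec_smul, Matrix.mulVec_smul, hMw v]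
  simp only [Pi.sub_apply, Pi.smul_apply, Pi.add_apply, smul_eq_mul]
  linear_combination (v i) * hs

lemma key2 (hmon : ϖ.Monic) (hirr : Irreducible ϖ)
    (hnd2 : ¬ ϖ ∣ (2:Fq[X])) (hnda : ¬ ϖ ∣ a) (hnddet : ¬ ϖ ∣ M.det)
    (hs : 2 * M.det * a * ea - 1 = ϖ ^ (m + m) * s)
    (x₀ : Fin n → Fq[X]) (hx₀ : ∀ i, x₀ i ∈ reps (m * ϖ.natDegree))
    (hcond : ∀ i, ϖ ^ m ∣ ((2 * a) • (M.mulVec x₀) - v) i) :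
    x₀ = (fun i => (ea * (M.adjugate.mulVec v) i) %ₘ ϖ ^ m) := by
  set xh := (fun i => (ea * (M.adjugate.mulVec v) i) %ₘ ϖ ^ m) with hxh
  have hcond2 := key1 (v := v) hmon hs
  have hδ : ∀ j, ϖ ^ m ∣ (2 * a) * (M.mulVec (x₀ - xh) j) := by
    intro j
    have h1 := hcond j
    have h2 := hcond2 j
    have he : (2 * a) * (M.mulVec (x₀ - xh) j)
        = ((2 * a) • (M.mulVec x₀) - v) j - ((2 * a) • (M.mulVec xh) - v) j := by
      rw [Matrix.mulVec_sub]
      simp only [Pi.sub_apply, Pi.smul_apply, smul_eq_mul]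
      ring
    rw [he]
    exact dvd_sub h1 h2
  have hδ2 : ∀ j, ϖ ^ m ∣ (2 * a * M.det) * (x₀ - xh) j := by
    intro j
    have hsum : ϖ ^ m ∣ ∑ l, M.adjugate j l * ((2 * a) * (M.mulVec (x₀ - xh) l)) :=
      Finset.dvd_sum (fun l _ => Dvd.dvd.mul_left (hδ l) _)
    have he : ∑ l, M.adjugate j l * ((2 * a) * (M.mulVec (x₀ - xh) l))
        = (2 * a * M.det) * (x₀ - xh) j := by
      have h3 : M.adjugate.mulVec (M.mulVec (x₀ - xh)) = M.det • (x₀ - xh) := by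
        rw [Matrix.mulVec_mulVec, Matrix.adjugate_mul, Matrix.smul_mulVec,
          Matrix.one_mulVec]
      have h4 := congrFun h3 j
      simp only [Matrix.mulVec, dotProduct, Pi.smul_apply, smul_eq_mul] at h4
      calc ∑ l, M.adjugate j l * ((2 * a) * (M.mulVec (x₀ - xh) l))
            = (2 * a) * ∑ l, M.adjugate j l * (M.mulVec (x₀ - xh) l) := by
              rw [Finset.mul_sum]; exact Finset.sum_congr rfl (fun l _ => by ring)
          _ = (2 * a) * (M.det * (x₀ - xh) j) := by
              rw [← h4]; rfl
          _ = (2 * a * M.det) * (x₀ - xh) j := by ring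
    rw [← he]
    exact hsum
  have hu : ¬ ϖ ∣ (2 * a * M.det) := by
    intro h
    rcases (hirr.prime.dvd_mul.1 h) with h' | h'
    · rcases (hirr.prime.dvd_mul.1 h') with h'' | h''
      · exact hnd2 h''
      · exact hnda h''
    · exact hnddet h'
  funext i
  have hdvd : ϖ ^ m ∣ x₀ i - xh i := by
    have := dvd_cancel hirr hu (hδ2 i)
    simpa using this
  exact reps_eq_of_dvd (hmon.pow m) (by rw [Polynomial.natDegree_pow]) (hx₀ i)
    (mod_mem_reps (hmon.pow m) (by rw [Polynomial.natDegree_pow]) _) hdvd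

lemma key3 (hmon : ϖ.Monic) (hMs : Mᵀ = M)
    (h22 : (2:Fq[X]) * C ((2:Fq)⁻¹) = 1)
    (hs : 2 * M.det * a * ea - 1 = ϖ ^ (m + m) * s) :
    ϖ ^ (m + m) ∣
      (a * ((fun i => (ea * (M.adjugate.mulVec v) i) %ₘ ϖ ^ m) ⬝ᵥ
          M.mulVec (fun i => (ea * (M.adjugate.mulVec v) i) %ₘ ϖ ^ m))
        - v ⬝ᵥ (fun i => (ea * (M.adjugate.mulVec v) i) %ₘ ϖ ^ m))
      - ((-(C ((2:Fq)⁻¹) * ea)) * (v ⬝ᵥ M.adjugate.mulVec v)) := by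
  set t2 := C ((2:Fq)⁻¹) with ht2
  set w := M.adjugate.mulVec v with hw
  set eps := (fun i => (ea * w i) /ₘ ϖ ^ m) with heps
  set P := v ⬝ᵥ w with hP
  rw [hatdecomp hmon ea w]
  rw [master M hMs v (ea • w) eps (-(ϖ ^ m)) a]
  have s1 : (ea • w) ⬝ᵥ M.mulVec (ea • w) = ea * (ea * (M.det * P)) := by
    rw [Matrix.mulVec_smul, hMw v, smul_dotProduct, dotProduct_smul,
      dotProduct_smul, smul_eq_mul, smul_eq_mul, smul_eq_mul, dotProduct_comm w v]
  have s2 : v ⬝ᵥ (ea • w) = ea * P := by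
    rw [dotProduct_smul, smul_eq_mul]
  have s3 : ((2 * a) • M.mulVec (ea • w) - v) ⬝ᵥ eps
      = (2 * a * ea * M.det) * (v ⬝ᵥ eps) - v ⬝ᵥ eps := by
    rw [Matrix.mulVec_smul, hMw v, sub_dotProduct, smul_dotProduct,
      smul_dotProduct, smul_dotProduct, smul_eq_mul, smul_eq_mul, smul_eq_mul]
    ring
  rw [s1, s2, s3]
  refine ⟨t2 * ea * P * s - ϖ ^ m * s * (v ⬝ᵥ eps) + a * (eps ⬝ᵥ M.mulVec eps), ?_⟩
  linear_combination (-(ϖ ^ m) * (v ⬝ᵥ eps) + t2 * ea * P) * hs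
    + (ea * P - a * M.det * ea ^ 2 * P) * h22

end key


/-! ### units and 2 -/

lemma pi_not_dvd_two {ϖ : Fq[X]} (hirr : Irreducible ϖ) (h2 : (2:Fq) ≠ 0) :
    ¬ ϖ ∣ (2:Fq[X]) := by
  intro h
  have h2' : (2:Fq[X]) = C (2:Fq) := by
    rw [map_ofNat C 2]
  have hu : IsUnit (2:Fq[X]) := by
    rw [h2']
    exact Polynomial.isUnit_C.2 (isUnit_iff_ne_zero.2 h2)
  exact hirr.not_isUnit (isUnit_of_dvd_unit h hu)

lemma pi_not_dvd_t2 {ϖ : Fq[X]} (hirr : Irreducible ϖ) (h2 : (2:Fq) ≠ 0) :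
    ¬ ϖ ∣ C ((2:Fq)⁻¹) := by
  intro h
  have hu : IsUnit (C ((2:Fq)⁻¹)) :=
    Polynomial.isUnit_C.2 (isUnit_iff_ne_zero.2 (inv_ne_zero h2))
  exact hirr.not_isUnit (isUnit_of_dvd_unit h hu)

lemma two_t2 (h2 : (2:Fq) ≠ 0) : (2:Fq[X]) * C ((2:Fq)⁻¹) = 1 := by
  have h2' : (2:Fq[X]) = C (2:Fq) := by rw [map_ofNat C 2]
  rw [h2', ← C_mul, mul_inv_cancel₀ h2, C_1]

/-! ### degree helpers for the decomposition -/

lemma div_mem_reps {ϖ : Fq[X]} (hmon : ϖ.Monic) {m : ℕ} {p : Fq[X]}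
    (hp : p ∈ reps ((m + m) * ϖ.natDegree)) : p /ₘ ϖ ^ m ∈ reps (m * ϖ.natDegree) := by
  rcases eq_or_ne (p /ₘ ϖ ^ m) 0 with h0 | h0
  · rw [h0, mem_reps, Polynomial.degree_zero]
    exact WithBot.bot_lt_coe _
  · have hp0 : p ≠ 0 := by
      intro hc
      rw [hc, Polynomial.zero_divByMonic] at h0
      exact h0 rfl
    rw [mem_reps, Polynomial.degree_eq_natDegree h0, Nat.cast_lt,
      Polynomial.natDegree_divByMonic _ (hmon.pow m), Polynomial.natDegree_pow]
    have h1 := mem_reps.1 hp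
    rw [Polynomial.degree_eq_natDegree hp0, Nat.cast_lt] at h1
    have hexp : (m + m) * ϖ.natDegree = m * ϖ.natDegree + m * ϖ.natDegree := by ring
    omega

lemma addmul_mem_reps {ϖ : Fq[X]} (hmon : ϖ.Monic) {m : ℕ} {p y : Fq[X]}
    (hp : p ∈ reps (m * ϖ.natDegree)) (hy : y ∈ reps (m * ϖ.natDegree)) :
    p + ϖ ^ m * y ∈ reps ((m + m) * ϖ.natDegree) := by
  rw [mem_reps] at hp hy ⊢
  have hmd : (m * ϖ.natDegree : ℕ) ≤ ((m + m) * ϖ.natDegree : ℕ) :=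
    Nat.mul_le_mul_right _ (by omega)
  refine lt_of_le_of_lt (Polynomial.degree_add_le _ _) (max_lt ?_ ?_)
  · exact lt_of_lt_of_le hp (by exact_mod_cast hmd)
  · rcases eq_or_ne y 0 with rfl | hy0
    · rw [mul_zero, Polynomial.degree_zero]
      exact WithBot.bot_lt_coe _
    · have hprod0 : ϖ ^ m * y ≠ 0 := mul_ne_zero (pow_ne_zero _ hmon.ne_zero) hy0
      rw [Polynomial.degree_eq_natDegree hprod0, Nat.cast_lt,
        Polynomial.natDegree_mul (pow_ne_zero _ hmon.ne_zero) hy0, Polynomial.natDegree_pow]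
      rw [Polynomial.degree_eq_natDegree hy0, Nat.cast_lt] at hy
      have hexp : (m + m) * ϖ.natDegree = m * ϖ.natDegree + m * ϖ.natDegree := by ring
      omega

/-! ### the inner sum -/

section inner
variable (ψ : LaurentSeries Fq → ℂ) {ϖ : Fq[X]}

lemma innersum (hmon : ϖ.Monic) (hirr : Irreducible ϖ)
    (hψ1 : ∀ x, ‖ψ x‖ = 1)
    (hψ2 : ∀ x y, ψ (x + y) = ψ x * ψ y)
    (hψ3 : ∀ p : Fq[X], ψ (OtoK p) = 1)
    (hψ4 : ∀ x, Kabs x ≤ (Fintype.card Fq : ℝ) ^ (-2 : ℤ) → ψ x = 1)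
    (hψ5 : ∃ x, Kabs x ≤ (Fintype.card Fq : ℝ) ^ (-1 : ℤ) ∧ ψ x ≠ 1)
    {n m : ℕ} (hm1 : 1 ≤ m)
    {M : Matrix (Fin n) (Fin n) Fq[X]} (hMs : Mᵀ = M)
    (v : Fin n → Fq[X])
    (h2q : (2:Fq) ≠ 0) (hnddet : ¬ ϖ ∣ M.det)
    {a : Fq[X]} (hnda : ¬ ϖ ∣ a) :
    ∑ x ∈ Fintype.piFinset (fun _ : Fin n => reps ((m + m) * ϖ.natDegree)),
        Efun ψ ϖ (m + m) (a * (x ⬝ᵥ M.mulVec x) - v ⬝ᵥ x)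
    = (Fintype.card Fq : ℂ) ^ (n * (m * ϖ.natDegree)) *
        Efun ψ ϖ (m + m) ((-(C ((2:Fq)⁻¹) * invmod (ϖ ^ (m + m)) (2 * M.det * a)))
          * (v ⬝ᵥ M.adjugate.mulVec v)) := by
  have hϖ0 : ϖ ≠ 0 := hmon.ne_zero
  have hmonm : (ϖ ^ m).Monic := hmon.pow m
  have hNm : (ϖ ^ m).natDegree = m * ϖ.natDegree := by rw [Polynomial.natDegree_pow]
  set ea := invmod (ϖ ^ (m + m)) (2 * M.det * a) with hea
  have hnd2 : ¬ ϖ ∣ (2:Fq[X]) := pi_not_dvd_two hirr h2q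
  have hu : ¬ ϖ ∣ (2 * M.det * a) := by
    intro h
    rcases hirr.prime.dvd_mul.1 h with h' | h'
    · rcases hirr.prime.dvd_mul.1 h' with h'' | h''
      · exact hnd2 h''
      · exact hnddet h''
    · exact hnda h'
  have hcop : IsCoprime (2 * M.det * a) (ϖ ^ (m + m)) :=
    ((hirr.coprime_iff_not_dvd.2 hu).symm).pow_right
  obtain ⟨s, hs⟩ := invmod_spec hcop
  rw [← hea] at hs
  set xh : Fin n → Fq[X] := (fun i => (ea * (M.adjugate.mulVec v) i) %ₘ ϖ ^ m) with hxh
  set piF : Finset (Fin n → Fq[X]) := Fintype.piFinset (fun _ : Fin n => reps (m * ϖ.natDegree)) with hpiF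
  have hstep1 : ∑ x ∈ Fintype.piFinset (fun _ : Fin n => reps ((m + m) * ϖ.natDegree)),
        Efun ψ ϖ (m + m) (a * (x ⬝ᵥ M.mulVec x) - v ⬝ᵥ x)
      = ∑ p ∈ piF ×ˢ piF, Efun ψ ϖ (m + m)
          (a * ((p.1 + ϖ ^ m • p.2) ⬝ᵥ M.mulVec (p.1 + ϖ ^ m • p.2))
            - v ⬝ᵥ (p.1 + ϖ ^ m • p.2)) := by
    refine Finset.sum_nbij' (fun x => (fun i => x i %ₘ ϖ ^ m, fun i => x i /ₘ ϖ ^ m))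
      (fun p => p.1 + ϖ ^ m • p.2) ?_ ?_ ?_ ?_ ?_
    · intro x hx
      rw [Finset.mem_product]
      refine ⟨Fintype.mem_piFinset.2 fun i => mod_mem_reps hmonm hNm _,
        Fintype.mem_piFinset.2 fun i => div_mem_reps hmon ((Fintype.mem_piFinset.1 hx) i)⟩
    · intro p hp
      rw [Finset.mem_product, Fintype.mem_piFinset, Fintype.mem_piFinset] at hp
      exact Fintype.mem_piFinset.2 fun i => by
        have := addmul_mem_reps hmon (hp.1 i) (hp.2 i)
        simpa using this
    · intro x hx
      funext i
      simp only [Pi.add_apply, Pi.smul_apply, smul_eq_mul]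
      exact Polynomial.modByMonic_add_div _ (ϖ ^ m)
    · intro p hp
      rw [Finset.mem_product, Fintype.mem_piFinset, Fintype.mem_piFinset] at hp
      have hmodc : ∀ i, (p.1 i + ϖ ^ m * p.2 i) %ₘ ϖ ^ m = p.1 i := by
        intro i
        refine reps_eq_of_dvd hmonm hNm (mod_mem_reps hmonm hNm _) (hp.1 i) ?_
        have he : (p.1 i + ϖ ^ m * p.2 i) %ₘ ϖ ^ m - p.1 i
            = -((p.1 i + ϖ ^ m * p.2 i) - (p.1 i + ϖ ^ m * p.2 i) %ₘ ϖ ^ m)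
              + ϖ ^ m * p.2 i := by ring
        rw [he]
        exact dvd_add (dvd_neg.2 (dvd_sub_mod hmonm _)) (dvd_mul_right _ _)
      refine Prod.ext ?_ ?_
      · funext i
        simp only [Pi.add_apply, Pi.smul_apply, smul_eq_mul]
        exact hmodc i
      · funext i
        simp only [Pi.add_apply, Pi.smul_apply, smul_eq_mul]
        have hX := Polynomial.modByMonic_add_div (p.1 i + ϖ ^ m * p.2 i) (ϖ ^ m)
        rw [hmodc i] at hX
        exact mul_left_cancel₀ (pow_ne_zero m hϖ0) (by linear_combination hX)
    · intro x hx
      have hxeq : ((fun i => x i %ₘ ϖ ^ m) + ϖ ^ m • (fun i => x i /ₘ ϖ ^ m)) = x := by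
        funext i
        simp only [Pi.add_apply, Pi.smul_apply, smul_eq_mul]
        exact Polynomial.modByMonic_add_div _ (ϖ ^ m)
      dsimp only
      rw [hxeq]
  rw [hstep1, Finset.sum_product]
  have hstep2 : ∀ x₀ ∈ piF, ∑ y ∈ piF, Efun ψ ϖ (m + m)
        (a * ((x₀ + ϖ ^ m • y) ⬝ᵥ M.mulVec (x₀ + ϖ ^ m • y)) - v ⬝ᵥ (x₀ + ϖ ^ m • y))
      = Efun ψ ϖ (m + m) (a * (x₀ ⬝ᵥ M.mulVec x₀) - v ⬝ᵥ x₀) *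
        (if (∀ i, ϖ ^ m ∣ ((2 * a) • (M.mulVec x₀) - v) i)
          then (Fintype.card Fq : ℂ) ^ (n * (m * ϖ.natDegree)) else 0) := by
    intro x₀ _
    have hterm : ∀ y : Fin n → Fq[X], Efun ψ ϖ (m + m)
          (a * ((x₀ + ϖ ^ m • y) ⬝ᵥ M.mulVec (x₀ + ϖ ^ m • y)) - v ⬝ᵥ (x₀ + ϖ ^ m • y))
        = Efun ψ ϖ (m + m) (a * (x₀ ⬝ᵥ M.mulVec x₀) - v ⬝ᵥ x₀) *
          Efun ψ ϖ (m + m) (ϖ ^ m * (((2 * a) • (M.mulVec x₀) - v) ⬝ᵥ y)) := by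
      intro y
      rw [master M hMs v x₀ y (ϖ ^ m) a, Efun_add ψ hψ2, Efun_add ψ hψ2,
        Efun_dvd ψ hψ3 hϖ0 (show ϖ ^ (m + m) ∣ ϖ ^ m * ϖ ^ m * (a * (y ⬝ᵥ M.mulVec y)) by
          rw [pow_add]; exact dvd_mul_right _ _), mul_one]
    rw [Finset.sum_congr rfl (fun y _ => hterm y), ← Finset.mul_sum,
      ysum ψ hmon hirr hψ1 hψ2 hψ3 hψ4 hψ5 hm1 ((2 * a) • (M.mulVec x₀) - v)]
  rw [Finset.sum_congr rfl hstep2]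
  have hxhmem : xh ∈ piF := Fintype.mem_piFinset.2 (fun i => mod_mem_reps hmonm hNm _)
  rw [Finset.sum_eq_single_of_mem xh hxhmem ?side]
  case side =>
    intro b hb hbne
    rw [if_neg, mul_zero]
    intro hcond
    exact hbne (key2 hmon hirr hnd2 hnda hnddet hs b
      (fun i => (Fintype.mem_piFinset.1 hb) i) hcond)
  rw [if_pos (key1 hmon hs),
    Efun_congr ψ hψ2 hψ3 hϖ0 (key3 hmon hMs (two_t2 h2q) hs), mul_comm]

end inner


/-! ### the involution on units mod ϖ^K -/

section sigma
variable {ϖ : Fq[X]}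

def sigmaF (ϖ dd : Fq[X]) (K : ℕ) (b : Fq[X]) : Fq[X] :=
  (-(C ((2:Fq)⁻¹) * invmod (ϖ ^ K) (2 * dd * b))) %ₘ ϖ ^ K

lemma not_dvd_triple (hirr : Irreducible ϖ) (h2q : (2:Fq) ≠ 0) {dd b : Fq[X]}
    (hnddet : ¬ ϖ ∣ dd) (hnb : ¬ ϖ ∣ b) : ¬ ϖ ∣ (2 * dd * b) := by
  intro h
  rcases hirr.prime.dvd_mul.1 h with h' | h'
  · rcases hirr.prime.dvd_mul.1 h' with h'' | h''
    · exact pi_not_dvd_two hirr h2q h''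
    · exact hnddet h''
  · exact hnb h'

lemma sigma_spec (hirr : Irreducible ϖ) (h2q : (2:Fq) ≠ 0) {dd b : Fq[X]} {K : ℕ}
    (hnddet : ¬ ϖ ∣ dd) (hnb : ¬ ϖ ∣ b) :
    ∃ s, 2 * dd * b * invmod (ϖ ^ K) (2 * dd * b) - 1 = ϖ ^ K * s := by
  have hcop : IsCoprime (2 * dd * b) (ϖ ^ K) :=
    ((hirr.coprime_iff_not_dvd.2 (not_dvd_triple hirr h2q hnddet hnb)).symm).pow_right
  exact invmod_spec hcop

lemma sigma_mem (hmon : ϖ.Monic) {dd b : Fq[X]} {K : ℕ} :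
    sigmaF ϖ dd K b ∈ reps (K * ϖ.natDegree) :=
  mod_mem_reps (hmon.pow K) (by rw [Polynomial.natDegree_pow]) _

lemma sigma_sub (hmon : ϖ.Monic) {dd b : Fq[X]} {K : ℕ} :
    ϖ ^ K ∣ sigmaF ϖ dd K b - (-(C ((2:Fq)⁻¹) * invmod (ϖ ^ K) (2 * dd * b))) := by
  have h := dvd_sub_mod (hmon.pow K) (-(C ((2:Fq)⁻¹) * invmod (ϖ ^ K) (2 * dd * b)))
  rw [← dvd_neg] at h
  have he : -((-(C ((2:Fq)⁻¹) * invmod (ϖ ^ K) (2 * dd * b)))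
      - (-(C ((2:Fq)⁻¹) * invmod (ϖ ^ K) (2 * dd * b))) %ₘ ϖ ^ K)
      = sigmaF ϖ dd K b - (-(C ((2:Fq)⁻¹) * invmod (ϖ ^ K) (2 * dd * b))) := by
    rw [sigmaF]; ring
  rwa [he] at h

lemma sigma_not_dvd (hmon : ϖ.Monic) (hirr : Irreducible ϖ) (h2q : (2:Fq) ≠ 0)
    {dd b : Fq[X]} {K : ℕ} (hK : 1 ≤ K) (hnddet : ¬ ϖ ∣ dd) (hnb : ¬ ϖ ∣ b) :
    ¬ ϖ ∣ sigmaF ϖ dd K b := by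
  intro hdvd
  set t2 := C ((2:Fq)⁻¹) with ht2
  set e := invmod (ϖ ^ K) (2 * dd * b) with he
  obtain ⟨s, hs⟩ := sigma_spec hirr h2q hnddet hnb (K := K)
  rw [← he] at hs
  have h1 : ϖ ∣ sigmaF ϖ dd K b - (-(t2 * e)) :=
    dvd_trans (dvd_pow_self ϖ (by omega)) (sigma_sub hmon)
  have h2 : ϖ ∣ t2 * e := by
    have : t2 * e = (sigmaF ϖ dd K b - (-(t2 * e))) - sigmaF ϖ dd K b := by ring
    rw [this]
    exact dvd_sub h1 hdvd
  rcases hirr.prime.dvd_mul.1 h2 with h3 | h3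
  · exact pi_not_dvd_t2 hirr h2q h3
  · have h4 : ϖ ∣ (1:Fq[X]) := by
      have h5 : (1:Fq[X]) = 2 * dd * b * e - ϖ ^ K * s := by linear_combination -hs
      rw [h5]
      exact dvd_sub (Dvd.dvd.mul_left h3 _) (Dvd.dvd.mul_right (dvd_pow_self ϖ (by omega)) _)
    exact hirr.not_isUnit (isUnit_of_dvd_one h4)

lemma sigma_invol (hmon : ϖ.Monic) (hirr : Irreducible ϖ) (h2q : (2:Fq) ≠ 0)
    {dd b : Fq[X]} {K : ℕ} (hK : 1 ≤ K) (hnddet : ¬ ϖ ∣ dd) (hnb : ¬ ϖ ∣ b)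
    (hb : b ∈ reps (K * ϖ.natDegree)) :
    sigmaF ϖ dd K (sigmaF ϖ dd K b) = b := by
  set t2 := C ((2:Fq)⁻¹) with ht2
  set e := invmod (ϖ ^ K) (2 * dd * b) with he
  set σb := sigmaF ϖ dd K b with hσb
  set e' := invmod (ϖ ^ K) (2 * dd * σb) with he'
  obtain ⟨s, hs⟩ := sigma_spec hirr h2q hnddet hnb (K := K)
  rw [← he] at hs
  have hnσ : ¬ ϖ ∣ σb := sigma_not_dvd hmon hirr h2q hK hnddet hnb
  obtain ⟨s', hs'⟩ := sigma_spec hirr h2q hnddet hnσ (K := K)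
  rw [← he'] at hs'
  obtain ⟨c, hc⟩ := sigma_sub hmon (dd := dd) (b := b) (K := K)
  rw [← hσb, ← ht2, ← he] at hc
  have hu' : ¬ ϖ ∣ (2 * dd * σb) := not_dvd_triple hirr h2q hnddet hnσ
  have hkey : ϖ ^ K ∣ (-(t2 * e')) - b := by
    refine dvd_cancel hirr hu' ⟨-(t2 * s') + t2 * s - 2 * dd * b * c, ?_⟩
    linear_combination (-(t2)) * hs' + (-(2 * dd * b)) * hc + t2 * hs
  have hmem : sigmaF ϖ dd K σb ∈ reps (K * ϖ.natDegree) := sigma_mem hmon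
  refine reps_eq_of_dvd (hmon.pow K) (by rw [Polynomial.natDegree_pow]) hmem hb ?_
  have hsub2 : ϖ ^ K ∣ sigmaF ϖ dd K σb - (-(t2 * e')) := by
    have := sigma_sub hmon (dd := dd) (b := σb) (K := K)
    rwa [← ht2, ← he'] at this
  have he2 : sigmaF ϖ dd K σb - b
      = (sigmaF ϖ dd K σb - (-(t2 * e'))) + ((-(t2 * e')) - b) := by ring
  rw [he2]
  exact dvd_add hsub2 hkey

end sigma


/-- Exact evaluation of the complete quadratic exponential sum modulo `ϖ^k` for even `k`
and `ϖ ∤ det M`: with `F(x) = xᵀMx` and `F*(w) = wᵀ·adj(M)·w`,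
`S_{ϖ^k}(v) = |ϖ|^{nk/2}(|ϖ|^k·δ_{ϖ^k ∣ F*(v)} − |ϖ|^{k−1}·δ_{ϖ^{k−1} ∣ F*(v)})`. -/
theorem stmt_3 (Fq : Type) [Field Fq] [Fintype Fq] (hodd : Odd (Fintype.card Fq))
    (n : ℕ) (hn : 1 ≤ n)
    (M : Matrix (Fin n) (Fin n) Fq[X]) (hM : M.IsSymm) (hdet : M.det ≠ 0)
    (ϖ : Fq[X]) (hmon : ϖ.Monic) (hirr : Irreducible ϖ) (hϖdet : ¬ ϖ ∣ M.det)
    (k : ℕ) (hk : 1 ≤ k) (hkeven : Even k) (v : Fin n → Fq[X])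
    (ψ : LaurentSeries Fq → ℂ)
    (hψ1 : ∀ x, ‖ψ x‖ = 1)
    (hψ2 : ∀ x y, ψ (x + y) = ψ x * ψ y)
    (hψ3 : ∀ p : Fq[X], ψ (OtoK p) = 1)
    (hψ4 : ∀ x, Kabs x ≤ (Fintype.card Fq : ℝ) ^ (-2 : ℤ) → ψ x = 1)
    (hψ5 : ∃ x, Kabs x ≤ (Fintype.card Fq : ℝ) ^ (-1 : ℤ) ∧ ψ x ≠ 1) :
    (∑ᶠ a ∈ {a : Fq[X] | Oabs a < Oabs ϖ ^ k ∧ IsCoprime a ϖ},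
      ∑ᶠ x ∈ {x : Fin n → Fq[X] | ∀ i, Oabs (x i) < Oabs ϖ ^ k},
        ψ (OtoK (a * (x ⬝ᵥ M.mulVec x) - v ⬝ᵥ x) / OtoK ϖ ^ k))
    = (↑(Oabs ϖ ^ (((n : ℝ) * (k : ℝ)) / 2)) : ℂ) *
        ((↑(Oabs ϖ ^ k) : ℂ) *
            (if ϖ ^ k ∣ v ⬝ᵥ M.adjugate.mulVec v then 1 else 0) -
          (↑(Oabs ϖ ^ (k - 1)) : ℂ) *
            (if ϖ ^ (k - 1) ∣ v ⬝ᵥ M.adjugate.mulVec v then 1 else 0)) := by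
  have hd : 1 ≤ ϖ.natDegree := hirr.natDegree_pos
  have hϖ0 : ϖ ≠ 0 := hmon.ne_zero
  have h2q : (2:Fq) ≠ 0 := two_ne_zero_of_odd_card hodd
  have hMs : Mᵀ = M := hM
  obtain ⟨m, hm⟩ := hkeven
  subst hm
  have hm1 : 1 ≤ m := by omega
  set P := v ⬝ᵥ M.adjugate.mulVec v with hP
  have hset1 : {a : Fq[X] | Oabs a < Oabs ϖ ^ (m + m) ∧ IsCoprime a ϖ}
      = ↑((reps ((m + m) * ϖ.natDegree)).filter (fun b => ¬ ϖ ∣ b)) := by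
    ext b
    simp only [Set.mem_setOf_eq, Finset.coe_filter, Finset.mem_filter, mem_reps]
    rw [Oabs_lt_iff hϖ0, isCoprime_comm, hirr.coprime_iff_not_dvd]
  have hset2 : {x : Fin n → Fq[X] | ∀ i, Oabs (x i) < Oabs ϖ ^ (m + m)}
      = ((Fintype.piFinset (fun _ : Fin n => reps ((m + m) * ϖ.natDegree))
          : Finset (Fin n → Fq[X])) : Set (Fin n → Fq[X])) := by
    ext x
    simp only [Set.mem_setOf_eq, Finset.mem_coe, Fintype.mem_piFinset, mem_reps]
    exact forall_congr' (fun i => Oabs_lt_iff hϖ0 _ _)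
  rw [hset1, finsum_mem_coe_finset]
  have hbody : ∀ a ∈ (reps ((m + m) * ϖ.natDegree)).filter (fun b => ¬ ϖ ∣ b),
      (∑ᶠ x ∈ {x : Fin n → Fq[X] | ∀ i, Oabs (x i) < Oabs ϖ ^ (m + m)},
        ψ (OtoK (a * (x ⬝ᵥ M.mulVec x) - v ⬝ᵥ x) / OtoK ϖ ^ (m + m)))
      = (Fintype.card Fq : ℂ) ^ (n * (m * ϖ.natDegree)) *
          Efun ψ ϖ (m + m) (sigmaF ϖ M.det (m + m) a * P) := by
    intro a ha
    rw [Finset.mem_filter] at ha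
    rw [hset2, finsum_mem_coe_finset]
    have h1 : ∀ x : Fin n → Fq[X],
        ψ (OtoK (a * (x ⬝ᵥ M.mulVec x) - v ⬝ᵥ x) / OtoK ϖ ^ (m + m))
        = Efun ψ ϖ (m + m) (a * (x ⬝ᵥ M.mulVec x) - v ⬝ᵥ x) := by
      intro x
      rw [Efun, map_pow]
    rw [Finset.sum_congr rfl (fun x _ => h1 x),
      innersum ψ hmon hirr hψ1 hψ2 hψ3 hψ4 hψ5 hm1 hMs v h2q hϖdet ha.2]
    congr 1
    apply Efun_congr ψ hψ2 hψ3 hϖ0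
    have hss := sigma_sub hmon (dd := M.det) (b := a) (K := m + m)
    have he : (-(C ((2:Fq)⁻¹) * invmod (ϖ ^ (m + m)) (2 * M.det * a))) * P
        - sigmaF ϖ M.det (m + m) a * P
        = -((sigmaF ϖ M.det (m + m) a
            - (-(C ((2:Fq)⁻¹) * invmod (ϖ ^ (m + m)) (2 * M.det * a)))) * P) := by
      ring
    rw [he]
    exact dvd_neg.2 (Dvd.dvd.mul_right hss _)
  rw [Finset.sum_congr rfl hbody, ← Finset.mul_sum]
  have hswap : ∑ a ∈ (reps ((m + m) * ϖ.natDegree)).filter (fun b => ¬ ϖ ∣ b),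
        Efun ψ ϖ (m + m) (sigmaF ϖ M.det (m + m) a * P)
      = ∑ b ∈ (reps ((m + m) * ϖ.natDegree)).filter (fun b => ¬ ϖ ∣ b),
        Efun ψ ϖ (m + m) (b * P) := by
    refine Finset.sum_nbij' (fun a => sigmaF ϖ M.det (m + m) a)
      (fun b => sigmaF ϖ M.det (m + m) b) ?_ ?_ ?_ ?_ ?_
    · intro a ha
      rw [Finset.mem_filter] at ha ⊢
      exact ⟨sigma_mem hmon, sigma_not_dvd hmon hirr h2q (by omega) hϖdet ha.2⟩
    · intro b hb
      rw [Finset.mem_filter] at hb ⊢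
      exact ⟨sigma_mem hmon, sigma_not_dvd hmon hirr h2q (by omega) hϖdet hb.2⟩
    · intro a ha
      rw [Finset.mem_filter] at ha
      exact sigma_invol hmon hirr h2q (by omega) hϖdet ha.2 ha.1
    · intro b hb
      rw [Finset.mem_filter] at hb
      exact sigma_invol hmon hirr h2q (by omega) hϖdet hb.2 hb.1
    · intro a _
      rfl
  rw [hswap]
  have htot : ∑ b ∈ reps ((m + m) * ϖ.natDegree), Efun ψ ϖ (m + m) (b * P)
      = if ϖ ^ (m + m) ∣ P then (Fintype.card Fq : ℂ) ^ ((m + m) * ϖ.natDegree) else 0 := by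
    rw [Finset.sum_congr rfl (fun b _ => by rw [mul_comm])]
    exact orth ψ hmon hirr hψ1 hψ2 hψ3 hψ4 hψ5 (m + m) (by omega) P
  have hdvdpart : ∑ b ∈ (reps ((m + m) * ϖ.natDegree)).filter (fun b => ϖ ∣ b),
        Efun ψ ϖ (m + m) (b * P)
      = if ϖ ^ (m + m - 1) ∣ P
          then (Fintype.card Fq : ℂ) ^ ((m + m - 1) * ϖ.natDegree) else 0 := by
    have hexp : (m + m) * ϖ.natDegree = (m + m - 1) * ϖ.natDegree + ϖ.natDegree := by
      have h9 : (m + m - 1) * ϖ.natDegree + ϖ.natDegree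
          = ((m + m - 1) + 1) * ϖ.natDegree := by ring
      rw [h9, show (m + m - 1) + 1 = m + m from by omega]
    have hpos : 0 < (m + m - 1) * ϖ.natDegree := Nat.mul_pos (by omega) hd
    have hbij : ∑ b ∈ (reps ((m + m) * ϖ.natDegree)).filter (fun b => ϖ ∣ b),
          Efun ψ ϖ (m + m) (b * P)
        = ∑ b' ∈ reps ((m + m - 1) * ϖ.natDegree),
            Efun ψ ϖ (m + m) (ϖ * b' * P) := by
      refine Finset.sum_nbij' (fun b => b /ₘ ϖ) (fun b' => ϖ * b') ?_ ?_ ?_ ?_ ?_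
      · intro b hb
        show b /ₘ ϖ ∈ reps ((m + m - 1) * ϖ.natDegree)
        rw [Finset.mem_filter, mem_reps] at hb
        rcases eq_or_ne (b /ₘ ϖ) 0 with h0 | h0
        · rw [h0, mem_reps, Polynomial.degree_zero]
          exact WithBot.bot_lt_coe _
        · have hb0 : b ≠ 0 := by
            intro hc
            rw [hc, Polynomial.zero_divByMonic] at h0
            exact h0 rfl
          rw [mem_reps, Polynomial.degree_eq_natDegree h0, Nat.cast_lt,
            Polynomial.natDegree_divByMonic _ hmon]
          have hb1 := hb.1
          rw [Polynomial.degree_eq_natDegree hb0, Nat.cast_lt] at hb1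
          omega
      · intro b' hb'
        show ϖ * b' ∈ (reps ((m + m) * ϖ.natDegree)).filter (fun b => ϖ ∣ b)
        rw [mem_reps] at hb'
        rw [Finset.mem_filter]
        refine ⟨?_, dvd_mul_right ϖ b'⟩
        rw [mem_reps]
        rcases eq_or_ne b' 0 with rfl | h0
        · rw [mul_zero, Polynomial.degree_zero]
          exact WithBot.bot_lt_coe _
        · rw [Polynomial.degree_eq_natDegree (mul_ne_zero hϖ0 h0), Nat.cast_lt,
            Polynomial.natDegree_mul hϖ0 h0]
          rw [Polynomial.degree_eq_natDegree h0, Nat.cast_lt] at hb'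
          omega
      · intro b hb
        show ϖ * (b /ₘ ϖ) = b
        rw [Finset.mem_filter] at hb
        have hmod : b %ₘ ϖ = 0 := (Polynomial.modByMonic_eq_zero_iff_dvd hmon).2 hb.2
        have hh := Polynomial.modByMonic_add_div b ϖ
        rw [hmod, zero_add] at hh
        exact hh
      · intro b' hb'
        show (ϖ * b') /ₘ ϖ = b'
        exact Polynomial.mul_divByMonic_cancel_left b' hmon
      · intro b hb
        show Efun ψ ϖ (m + m) (b * P) = Efun ψ ϖ (m + m) (ϖ * (b /ₘ ϖ) * P)
        rw [Finset.mem_filter] at hb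
        have hmod : b %ₘ ϖ = 0 := (Polynomial.modByMonic_eq_zero_iff_dvd hmon).2 hb.2
        have hh := Polynomial.modByMonic_add_div b ϖ
        rw [hmod, zero_add] at hh
        rw [show ϖ * (b /ₘ ϖ) * P = b * P from by rw [hh]]
    rw [hbij]
    have hshift : ∀ b' : Fq[X], Efun ψ ϖ (m + m) (ϖ * b' * P)
        = Efun ψ ϖ (m + m - 1) (b' * P) := by
      intro b'
      have hsh := Efun_pow_shift ψ hϖ0 1 (m + m - 1) (b' * P)
      rw [show (1 + (m + m - 1)) = m + m from by omega, pow_one, ← mul_assoc] at hsh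
      exact hsh
    rw [Finset.sum_congr rfl (fun b' _ => hshift b'),
      Finset.sum_congr rfl (fun b' _ => by rw [mul_comm b' P])]
    exact orth ψ hmon hirr hψ1 hψ2 hψ3 hψ4 hψ5 (m + m - 1) (by omega) P
  have hAsum : ∑ b ∈ (reps ((m + m) * ϖ.natDegree)).filter (fun b => ¬ ϖ ∣ b),
        Efun ψ ϖ (m + m) (b * P)
      = (if ϖ ^ (m + m) ∣ P then (Fintype.card Fq : ℂ) ^ ((m + m) * ϖ.natDegree) else 0)
        - (if ϖ ^ (m + m - 1) ∣ P
            then (Fintype.card Fq : ℂ) ^ ((m + m - 1) * ϖ.natDegree) else 0) := by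
    have hpart := Finset.sum_filter_add_sum_filter_not (reps ((m + m) * ϖ.natDegree))
      (fun b => ϖ ∣ b) (fun b => Efun ψ ϖ (m + m) (b * P))
    rw [← htot, ← hdvdpart]
    linear_combination hpart
  rw [hAsum]
  -- numerics
  have hOabs : Oabs ϖ = ((Fintype.card Fq : ℝ)) ^ ϖ.natDegree := by
    rw [Oabs, if_neg hϖ0]
  have hQR : (↑(Oabs ϖ ^ (((n : ℝ) * ((m + m : ℕ) : ℝ)) / 2)) : ℂ)
      = (Fintype.card Fq : ℂ) ^ (n * (m * ϖ.natDegree)) := by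
    rw [hOabs]
    have hexp : (((n : ℝ) * ((m + m : ℕ) : ℝ)) / 2) = ((n * m : ℕ) : ℝ) := by
      push_cast
      ring
    rw [hexp, Real.rpow_natCast, ← pow_mul]
    push_cast
    rw [show ϖ.natDegree * (n * m) = n * (m * ϖ.natDegree) from by ring]
  have hQ1 : (↑(Oabs ϖ ^ (m + m)) : ℂ)
      = (Fintype.card Fq : ℂ) ^ ((m + m) * ϖ.natDegree) := by
    rw [hOabs, ← pow_mul]
    push_cast
    rw [show ϖ.natDegree * (m + m) = (m + m) * ϖ.natDegree from by ring]
  have hQ2 : (↑(Oabs ϖ ^ (m + m - 1)) : ℂ)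
      = (Fintype.card Fq : ℂ) ^ ((m + m - 1) * ϖ.natDegree) := by
    rw [hOabs, ← pow_mul]
    push_cast
    rw [show ϖ.natDegree * (m + m - 1) = (m + m - 1) * ϖ.natDegree from by ring]
  rw [hQR, hQ1, hQ2]
  split_ifs <;> ring


end
end

section
/- Let a, r ∈ O with r monic of degree M and gcd(a,r) = 1. Then there exist a1, r1 ∈ O with r1 of degree M+1, gcd(a1,r1) = 1, and |a/r − a1/r1| = q^{−2M−1} = (|r|·|r1|)^{−1}, where a/r − a1/r1 is computed in the fraction field F_q(t) (equivalently, a·r1 − a1·r is a nonzero constant). -/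
set_option autoImplicit false

noncomputable section

open Polynomial Matrix
open scoped Classical

variable {Fq : Type} [Field Fq] [Fintype Fq]

/-- Refined one-dimensional Dirichlet approximation: given `a/r` in lowest terms with
`r` monic of degree `M`, there is `a₁/r₁` with `deg r₁ = M + 1`, `gcd(a₁,r₁) = 1`, and
`|a/r − a₁/r₁| = q^{−2M−1} = (|r||r₁|)^{−1}`; equivalently, `a·r₁ − a₁·r` is a nonzero
constant, i.e. has degree `0`. -/
theorem stmt_10 (Fq : Type) [Field Fq] [Fintype Fq]
    (a r : Fq[X]) (M : ℕ) (hr : r.Monic) (hdeg : r.natDegree = M)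
    (hco : IsCoprime a r) :
    ∃ a1 r1 : Fq[X], r1 ≠ 0 ∧ r1.natDegree = M + 1 ∧ IsCoprime a1 r1 ∧
      (a * r1 - a1 * r).degree = 0 := by
  obtain ⟨u, v, huv⟩ := hco
  set u' : Fq[X] := u %ₘ r with hu'
  set v' : Fq[X] := v + a * (u /ₘ r) with hv'
  have hkey : u' * a + v' * r = 1 := by
    have := Polynomial.modByMonic_add_div u r
    linear_combination huv + a * this
  have hr0 : r ≠ 0 := hr.ne_zero
  have hdXr : (X * r).degree = ((M + 1 : ℕ) : WithBot ℕ) := by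
    rw [degree_mul, degree_X, Polynomial.degree_eq_natDegree hr0, hdeg]
    push_cast
    ring
  have hlt : u'.degree < (X * r).degree := by
    refine lt_of_lt_of_le (Polynomial.degree_modByMonic_lt u hr) ?_
    rw [hdXr, Polynomial.degree_eq_natDegree hr0, hdeg]
    exact_mod_cast Nat.le_succ M
  have hdr1 : (u' + X * r).degree = ((M + 1 : ℕ) : WithBot ℕ) := by
    rw [Polynomial.degree_add_eq_right_of_degree_lt hlt, hdXr]
  refine ⟨a * X - v', u' + X * r, ?_, ?_, ?_, ?_⟩
  · intro h
    rw [h, Polynomial.degree_zero] at hdr1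
    exact absurd hdr1.symm (by exact_mod_cast WithBot.coe_ne_bot)
  · exact Polynomial.natDegree_eq_of_degree_eq_some hdr1
  · exact ⟨-r, a, by linear_combination hkey⟩
  · have h1 : a * (u' + X * r) - (a * X - v') * r = 1 := by linear_combination hkey
    rw [h1, Polynomial.degree_one]
end
end

section
/- Let c1, c2, r ∈ O with r monic and gcd(c1,c2,r) = 1. Then for every a = (a1,a2) ∈ O², the following are equivalent: (i) gcd(a1,a2,r) = 1 and r ∣ c1·a1 + c2·a2; (ii) there exists b ∈ O with gcd(b,r) = 1 such that r ∣ a1 + b·c2 and r ∣ a2 − b·c1 (i.e., a ≡ b·(−c2, c1) mod r). -/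
set_option autoImplicit false

noncomputable section

open Polynomial Matrix
open scoped Classical

variable {Fq : Type} [Field Fq] [Fintype Fq]

/-- The residues `a mod r` with `gcd(a₁,a₂,r) = 1` lying on `c₁a₁ + c₂a₂ ≡ 0 (mod r)`
are exactly the multiples `b·(−c₂, c₁) mod r` for `b` coprime to `r`. -/
theorem stmt_11 (Fq : Type) [Field Fq] [Fintype Fq]
    (c1 c2 r : Fq[X]) (hr : r.Monic) (h : CoprimeTriple c1 c2 r)
    (a1 a2 : Fq[X]) :
    (CoprimeTriple a1 a2 r ∧ r ∣ c1 * a1 + c2 * a2) ↔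
      (∃ b : Fq[X], IsCoprime b r ∧ r ∣ a1 + b * c2 ∧ r ∣ a2 - b * c1) := by
  have hr0 : r ≠ 0 := hr.ne_zero
  constructor
  · rintro ⟨ha, hd⟩
    obtain ⟨k, hk⟩ := hd
    -- Bezout data for gcd(c1, c2, r) = 1
    have hg : IsUnit (EuclideanDomain.gcd c1 (EuclideanDomain.gcd c2 r)) := by
      refine h _ (EuclideanDomain.gcd_dvd_left _ _) ?_ ?_
      · exact (EuclideanDomain.gcd_dvd_right _ _).trans (EuclideanDomain.gcd_dvd_left _ _)
      · exact (EuclideanDomain.gcd_dvd_right _ _).trans (EuclideanDomain.gcd_dvd_right _ _)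
    have hco : IsCoprime c1 (EuclideanDomain.gcd c2 r) :=
      EuclideanDomain.gcd_isUnit_iff.mp hg
    obtain ⟨u, v, huv⟩ := hco
    set x := EuclideanDomain.gcdA c2 r with hxdef
    set y := EuclideanDomain.gcdB c2 r with hydef
    have hgab : EuclideanDomain.gcd c2 r = c2 * x + r * y :=
      EuclideanDomain.gcd_eq_gcd_ab c2 r
    have key : u * c1 + v * x * c2 + v * y * r = 1 := by
      rw [hgab] at huv; linear_combination huv
    set b := u * a2 - v * x * a1 with hbdef
    have e1 : a1 + b * c2 = r * (u * k + v * y * a1) := by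
      rw [hbdef]; linear_combination u * hk - a1 * key
    have e2 : a2 - b * c1 = r * (v * x * k + v * y * a2) := by
      rw [hbdef]; linear_combination v * x * hk - a2 * key
    refine ⟨b, ?_, ⟨_, e1⟩, ⟨_, e2⟩⟩
    -- coprimality with r
    rw [← EuclideanDomain.gcd_isUnit_iff]
    by_contra hng
    have hgne : EuclideanDomain.gcd b r ≠ 0 := by
      intro h0
      exact hr0 (EuclideanDomain.gcd_eq_zero_iff.mp h0).2
    obtain ⟨p, hp, hpd⟩ := WfDvdMonoid.exists_irreducible_factor hng hgne
    have hpb : p ∣ b := hpd.trans (EuclideanDomain.gcd_dvd_left _ _)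
    have hpr : p ∣ r := hpd.trans (EuclideanDomain.gcd_dvd_right _ _)
    have h1 : p ∣ a1 := by
      have : p ∣ r * (u * k + v * y * a1) - b * c2 := by
        exact dvd_sub (hpr.mul_right _) (hpb.mul_right _)
      have ha1 : a1 = r * (u * k + v * y * a1) - b * c2 := by linear_combination e1
      rwa [← ha1] at this
    have h2 : p ∣ a2 := by
      have : p ∣ r * (v * x * k + v * y * a2) + b * c1 := by
        exact dvd_add (hpr.mul_right _) (hpb.mul_right _)
      have ha2 : a2 = r * (v * x * k + v * y * a2) + b * c1 := by linear_combination e2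
      rwa [← ha2] at this
    exact hp.not_isUnit (ha p h1 h2 hpr)
  · rintro ⟨b, hb, h1, h2⟩
    constructor
    · intro p hp1 hp2 hpr
      have hpb1 : p ∣ b * c2 := by
        have := dvd_sub (hpr.trans h1) hp1
        simpa using this
      have hpb2 : p ∣ b * c1 := by
        have := dvd_sub hp2 (hpr.trans h2)
        simpa using this
      have hpb : IsCoprime p b := (hb.of_isCoprime_of_dvd_right hpr).symm
      exact h p (hpb.dvd_of_dvd_mul_left hpb2) (hpb.dvd_of_dvd_mul_left hpb1) hpr
    · obtain ⟨s, hs⟩ := h1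
      obtain ⟨t, ht⟩ := h2
      exact ⟨c1 * s + c2 * t, by linear_combination c1 * hs + c2 * ht⟩
end
end

section
/- Let c = (c1,c2) ∈ O² be primitive, let r ∈ O be monic, and let a = (a1,a2) ∈ O² with |a| < |r|, gcd(a1,a2,r) = 1 and r ∣ c1·a1 + c2·a2 (i.e., a/r lies on L(c)). Then there exists a unique pair (b, e) with b ∈ O, |b| < |r|, gcd(b,r) = 1, and e = (e1,e2) ∈ O² with max(|e1|,|e2|) < max(|c1|,|c2|), such that a = b·(−c2, c1) + r·e. -/
set_option autoImplicit false

noncomputable section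

open Polynomial Matrix
open scoped Classical

variable {Fq : Type} [Field Fq] [Fintype Fq]

lemma one_lt_cardFq : (1 : ℝ) < (Fintype.card Fq : ℝ) := by
  exact_mod_cast Fintype.one_lt_card

lemma Oabs_zero : Oabs (0 : Fq[X]) = 0 := if_pos rfl

lemma Oabs_nonneg (x : Fq[X]) : 0 ≤ Oabs x := by
  unfold Oabs; split
  · exact le_refl 0
  · positivity

lemma Oabs_neg (x : Fq[X]) : Oabs (-x) = Oabs x := by
  unfold Oabs; simp

lemma Oabs_pos {x : Fq[X]} (hx : x ≠ 0) : 0 < Oabs x := by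
  unfold Oabs; rw [if_neg hx]; positivity

lemma one_le_Oabs {x : Fq[X]} (hx : x ≠ 0) : 1 ≤ Oabs x := by
  unfold Oabs; rw [if_neg hx]
  exact one_le_pow₀ (le_of_lt (one_lt_cardFq (Fq := Fq)))

lemma Oabs_mul (x y : Fq[X]) : Oabs (x * y) = Oabs x * Oabs y := by
  unfold Oabs
  by_cases hx : x = 0
  · simp [hx]
  by_cases hy : y = 0
  · simp [hy]
  rw [if_neg hx, if_neg hy, if_neg (mul_ne_zero hx hy),
    Polynomial.natDegree_mul hx hy, pow_add]

lemma Oabs_lt_of_natDegree_lt {x y : Fq[X]} (hy : y ≠ 0)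
    (h : x = 0 ∨ x.natDegree < y.natDegree) : Oabs x < Oabs y := by
  by_cases hx : x = 0
  · rw [hx, Oabs_zero]; exact Oabs_pos hy
  rcases h with h | h
  · exact absurd h hx
  · unfold Oabs
    rw [if_neg hx, if_neg hy]
    exact pow_lt_pow_right₀ (one_lt_cardFq (Fq := Fq)) h

lemma Oabs_le_of_natDegree_le {x y : Fq[X]} (hy : y ≠ 0)
    (h : x = 0 ∨ x.natDegree ≤ y.natDegree) : Oabs x ≤ Oabs y := by
  by_cases hx : x = 0
  · rw [hx, Oabs_zero]; exact (Oabs_pos hy).le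
  rcases h with h | h
  · exact absurd h hx
  · unfold Oabs
    rw [if_neg hx, if_neg hy]
    exact pow_le_pow_right₀ (one_lt_cardFq (Fq := Fq)).le h

lemma natDegree_lt_of_Oabs_lt {x y : Fq[X]} (hx : x ≠ 0) (h : Oabs x < Oabs y) :
    x.natDegree < y.natDegree := by
  by_contra hle
  push_neg at hle
  by_cases hy : y = 0
  · rw [hy, Oabs_zero] at h
    exact absurd h (not_lt.2 (Oabs_pos hx).le)
  · exact absurd h (not_lt.2 (Oabs_le_of_natDegree_le hx (Or.inr hle)))

lemma eq_zero_of_dvd_of_Oabs_lt {r x : Fq[X]} (hd : r ∣ x) (h : Oabs x < Oabs r) :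
    x = 0 := by
  by_contra hx
  have := Polynomial.natDegree_le_of_dvd hd hx
  exact absurd (natDegree_lt_of_Oabs_lt hx h) (not_lt.2 this)

lemma Oabs_add_le (x y : Fq[X]) : Oabs (x + y) ≤ max (Oabs x) (Oabs y) := by
  by_cases hx : x = 0
  · simp [hx, le_max_right]
  by_cases hy : y = 0
  · simp [hy, le_max_left]
  by_cases hxy : x + y = 0
  · rw [hxy, Oabs_zero]
    exact le_max_of_le_left (Oabs_nonneg x)
  have h := Polynomial.natDegree_add_le x y
  rcases le_max_iff.1 h with h' | h'
  · exact le_max_of_le_left (Oabs_le_of_natDegree_le hx (Or.inr h'))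
  · exact le_max_of_le_right (Oabs_le_of_natDegree_le hy (Or.inr h'))

/-- For a primitive pair `c` and a rational point `a/r` on `L(c)`, there is a unique
representation `a = b·(−c₂, c₁) + r·e` with `|b| < |r|`, `gcd(b,r) = 1` and `|e| < |c|`. -/
theorem stmt_12 (Fq : Type) [Field Fq] [Fintype Fq]
    (c : Fq[X] × Fq[X]) (hc : Primitive c)
    (r : Fq[X]) (hr : r.Monic)
    (a : Fq[X] × Fq[X]) (ha : Oabs2 a < Oabs r) (hco : CoprimeTriple a.1 a.2 r)
    (hline : r ∣ c.1 * a.1 + c.2 * a.2) :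
    ∃! be : Fq[X] × (Fq[X] × Fq[X]),
      Oabs be.1 < Oabs r ∧ IsCoprime be.1 r ∧
      Oabs2 be.2 < Oabs2 c ∧
      a.1 = be.1 * (-c.2) + r * be.2.1 ∧ a.2 = be.1 * c.1 + r * be.2.2 := by
  have hr0 : r ≠ 0 := hr.ne_zero
  have hrpos : 0 < Oabs r := Oabs_pos hr0
  obtain ⟨m, hm⟩ := hline
  obtain ⟨u, v, huv⟩ := hc.1
  -- the pair c is nonzero, so |c| ≥ 1
  have hcne : c.1 ≠ 0 ∨ c.2 ≠ 0 := by
    rcases hc.2 with h | h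
    · exact Or.inl h.ne_zero
    · exact Or.inr h.2.ne_zero
  have hC1 : (1 : ℝ) ≤ Oabs2 c := by
    rcases hcne with h | h
    · exact le_trans (one_le_Oabs h) (le_max_left _ _)
    · exact le_trans (one_le_Oabs h) (le_max_right _ _)
  have hCpos : (0 : ℝ) < Oabs2 c := lt_of_lt_of_le one_pos hC1
  set b0 : Fq[X] := u * a.2 - v * a.1 with hb0def
  set b : Fq[X] := b0 %ₘ r with hbdef
  set qq : Fq[X] := b0 /ₘ r with hqdef
  have hdecomp : b + r * qq = b0 := Polynomial.modByMonic_add_div b0 r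
  set e1 : Fq[X] := u * m - qq * c.2 with he1def
  set e2 : Fq[X] := v * m + qq * c.1 with he2def
  -- the two defining equations
  have heq1 : a.1 = b * (-c.2) + r * e1 := by
    have hb : b = b0 - r * qq := eq_sub_of_add_eq hdecomp
    rw [hb, hb0def, he1def]
    linear_combination u * hm - a.1 * huv
  have heq2 : a.2 = b * c.1 + r * e2 := by
    have hb : b = b0 - r * qq := eq_sub_of_add_eq hdecomp
    rw [hb, hb0def, he2def]
    linear_combination v * hm - a.2 * huv
  -- degree bound for b
  have hbdeg : Oabs b < Oabs r := by
    by_cases hb : b = 0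
    · simpa [Oabs, hb] using hrpos
    · refine Oabs_lt_of_natDegree_lt hr0 (Or.inr ?_)
      exact Polynomial.natDegree_lt_natDegree hb (Polynomial.degree_modByMonic_lt b0 hr)
  have ha1 : Oabs a.1 < Oabs r := lt_of_le_of_lt (le_max_left _ _) ha
  have ha2 : Oabs a.2 < Oabs r := lt_of_le_of_lt (le_max_right _ _) ha
  -- degree bound for e
  have keybound : ∀ (x y : Fq[X]) (e : Fq[X]), Oabs x < Oabs r → Oabs y ≤ Oabs2 c →
      x = b * y + r * e → Oabs e < Oabs2 c := by
    intro x y e hx hy hxe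
    have hre : r * e = x + b * (-y) := by linear_combination -hxe
    have h1 : Oabs (r * e) ≤ max (Oabs x) (Oabs (b * (-y))) := hre ▸ Oabs_add_le _ _
    have hnegy : Oabs (-y) = Oabs y := Oabs_neg y
    have h2 : Oabs x < Oabs r * Oabs2 c :=
      lt_of_lt_of_le hx (le_mul_of_one_le_right hrpos.le hC1)
    have h3 : Oabs (b * (-y)) < Oabs r * Oabs2 c := by
      rw [Oabs_mul, hnegy]
      calc Oabs b * Oabs y ≤ Oabs b * Oabs2 c :=
            mul_le_mul_of_nonneg_left hy (Oabs_nonneg b)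
        _ < Oabs r * Oabs2 c := mul_lt_mul_of_pos_right hbdeg hCpos
    have : Oabs r * Oabs e < Oabs r * Oabs2 c := by
      rw [← Oabs_mul]
      exact lt_of_le_of_lt h1 (max_lt h2 h3)
    exact lt_of_mul_lt_mul_left this hrpos.le
  have he1b : Oabs e1 < Oabs2 c :=
    keybound a.1 (-c.2) e1 ha1 (by
      rw [Oabs_neg]; exact le_max_right _ _) heq1
  have he2b : Oabs e2 < Oabs2 c :=
    keybound a.2 c.1 e2 ha2 (le_max_left _ _) heq2
  -- coprimality of b and r
  have hcop : IsCoprime b r := by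
    apply EuclideanDomain.isCoprime_of_dvd
    · rintro ⟨-, hr0'⟩; exact hr0 hr0'
    · intro z hz hz0 hzb hzr
      have hza1 : z ∣ a.1 := by
        rw [heq1]
        exact dvd_add (hzb.mul_right _) (hzr.mul_right _)
      have hza2 : z ∣ a.2 := by
        rw [heq2]
        exact dvd_add (hzb.mul_right _) (hzr.mul_right _)
      exact hz (hco z hza1 hza2 hzr)
  refine ⟨(b, (e1, e2)), ⟨hbdeg, hcop, max_lt he1b he2b, heq1, heq2⟩, ?_⟩
  -- uniqueness
  rintro ⟨b', e1', e2'⟩ ⟨hb'deg, -, -, heq1', heq2'⟩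
  have h1 : (b' - b) * c.2 = r * (e1' - e1) := by linear_combination heq1' - heq1
  have h2 : (b' - b) * c.1 = r * (e2 - e2') := by linear_combination heq2 - heq2'
  have hdvd : r ∣ (b' - b) := ⟨u * (e2 - e2') + v * (e1' - e1), by
    linear_combination u * h2 + v * h1 - (b' - b) * huv⟩
  have hbb : b' - b = 0 := by
    refine eq_zero_of_dvd_of_Oabs_lt hdvd ?_
    have := Oabs_add_le b' (-b)
    rw [Oabs_neg] at this
    exact lt_of_le_of_lt (by simpa [sub_eq_add_neg] using this) (max_lt hb'deg hbdeg)
  have hbeq : b' = b := sub_eq_zero.1 hbb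
  have he1eq : e1' = e1 := by
    have : r * e1' = r * e1 := by
      have := heq1'.symm.trans heq1
      rw [hbeq] at this
      linear_combination this
    exact (mul_left_cancel₀ hr0 this)
  have he2eq : e2' = e2 := by
    have : r * e2' = r * e2 := by
      have := heq2'.symm.trans heq2
      rw [hbeq] at this
      linear_combination this
    exact (mul_left_cancel₀ hr0 this)
  simp [hbeq, he1eq, he2eq]
end
end
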